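/- arXiv:hep-th/0109198 — 2 statements merged into one kernel-verified Lean document; each statement's English description precedes it below -/
import Mathlib

section
/- With (γ')^{-1/2}(z) = cz + d for γ(z) = (az+b)/(cz+d), ad-bc = 1: if u, v are linearly independent solutions of the Fuchs equation u'' + (1/2)T u = 0 with T∘γ·(γ')^2 = T on a connected domain, then there exists a constant matrix χ ∈ SL(2,ℂ) such that (cz+d)·(u(γz), v(γz))ᵀ = χ·(u(z), v(z))ᵀ for all z. -/
lemma monodromy_gderiv {a b c d : ℂ} (had : a * d - b * c = 1) {z : ℂ}
    (hz : c * z + d ≠ 0) :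
    HasDerivAt (fun w => (a * w + b) / (c * w + d)) (1 / (c * z + d) ^ 2) z := by
  have h1 : HasDerivAt (fun w => a * w + b) a z := by
    simpa using ((hasDerivAt_id z).const_mul a).add_const b
  have h2 : HasDerivAt (fun w => c * w + d) c z := by
    simpa using ((hasDerivAt_id z).const_mul c).add_const d
  have := h1.div h2 hz
  have hnum : a * (c * z + d) - (a * z + b) * c = 1 := by linear_combination had
  rwa [hnum] at this

open Metric in
lemma monodromy_const_aux {U : Set ℂ} (hU : IsOpen U) (hUc : IsPreconnected U)
    {f : ℂ → ℂ} (hf : ∀ z ∈ U, HasDerivAt f 0 z) {z₀ : ℂ} (h₀ : z₀ ∈ U) :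
    ∀ z ∈ U, f z = f z₀ := by
  set S : Set ℂ := {z | z ∈ U ∧ f z = f z₀} with hS
  have hball : ∀ z ∈ U, ∀ r > (0:ℝ), ball z r ⊆ U → ∀ w ∈ ball z r, f w = f z := by
    intro z hz r hr hsub w hw
    refine (convex_ball z r).is_const_of_fderivWithin_eq_zero
      (fun x hx => ((hf x (hsub hx)).differentiableAt).differentiableWithinAt)
      (fun x hx => ?_) hw (mem_ball_self hr)
    rw [fderivWithin_of_isOpen isOpen_ball hx]
    rw [(hf x (hsub hx)).hasFDerivAt.fderiv]
    ext; simp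
  have hSopen : IsOpen S := by
    rw [isOpen_iff_mem_nhds]
    rintro z ⟨hzU, hzv⟩
    obtain ⟨r, hr, hsub⟩ := Metric.isOpen_iff.1 hU z hzU
    have : ball z r ⊆ S := fun w hw =>
      ⟨hsub hw, (hball z hzU r hr hsub w hw).trans hzv⟩
    exact Filter.mem_of_superset (ball_mem_nhds z hr) this
  have key : U ⊆ S := by
    refine hUc.subset_of_closure_inter_subset hSopen ⟨z₀, h₀, h₀, rfl⟩ ?_
    rintro z ⟨hcl, hzU⟩
    refine ⟨hzU, ?_⟩
    have hc : ContinuousWithinAt f S z :=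
      ((hf z hzU).differentiableAt.continuousAt).continuousWithinAt
    have h1 : f z ∈ closure (f '' S) := hc.mem_closure_image hcl
    have himg : f '' S ⊆ {f z₀} := by rintro _ ⟨x, ⟨_, hx⟩, rfl⟩; exact hx
    have := closure_mono himg h1
    simpa using this
  exact fun z hz => (key hz).2

/-- Row lemma: `(cz+d)·w(γz)` is the indicated constant combination of `u, v`. -/
lemma monodromy_row
    (U : Set ℂ) (hU : IsOpen U) (hUc : IsPreconnected U)
    (a b c d : ℂ) (had : a * d - b * c = 1)
    (T u v w : ℂ → ℂ) (W : ℂ) (hWne : W ≠ 0)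
    (hmaps : ∀ z ∈ U, (a * z + b) / (c * z + d) ∈ U)
    (hden : ∀ z ∈ U, c * z + d ≠ 0)
    (hu1 : DifferentiableOn ℂ u U) (hu2 : DifferentiableOn ℂ (deriv u) U)
    (hv1 : DifferentiableOn ℂ v U) (hv2 : DifferentiableOn ℂ (deriv v) U)
    (hw1 : DifferentiableOn ℂ w U) (hw2 : DifferentiableOn ℂ (deriv w) U)
    (hu : ∀ z ∈ U, deriv (deriv u) z + (1 / 2) * T z * u z = 0)
    (hv : ∀ z ∈ U, deriv (deriv v) z + (1 / 2) * T z * v z = 0)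
    (hw : ∀ z ∈ U, deriv (deriv w) z + (1 / 2) * T z * w z = 0)
    (hW : ∀ z ∈ U, u z * deriv v z - deriv u z * v z = W)
    (hTtr : ∀ z ∈ U,
      T ((a * z + b) / (c * z + d)) *
        (deriv (fun w => (a * w + b) / (c * w + d)) z) ^ 2 = T z)
    (z₀ : ℂ) (hz₀ : z₀ ∈ U) :
    ∀ z ∈ U, (c * z + d) * w ((a * z + b) / (c * z + d)) =
      (((c * z₀ + d) * w ((a * z₀ + b) / (c * z₀ + d)) * deriv v z₀ -
          (c * w ((a * z₀ + b) / (c * z₀ + d)) +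
            deriv w ((a * z₀ + b) / (c * z₀ + d)) / (c * z₀ + d)) * v z₀) / W) * u z +
      ((u z₀ * (c * w ((a * z₀ + b) / (c * z₀ + d)) +
            deriv w ((a * z₀ + b) / (c * z₀ + d)) / (c * z₀ + d)) -
          deriv u z₀ * ((c * z₀ + d) * w ((a * z₀ + b) / (c * z₀ + d)))) / W) * v z := by
  set g : ℂ → ℂ := fun z => (a * z + b) / (c * z + d) with hg
  -- derivative of tilde-w
  have htil : ∀ z ∈ U, HasDerivAt (fun z => (c * z + d) * w (g z))
      (c * w (g z) + deriv w (g z) / (c * z + d)) z := by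
    intro z hz
    have hdz := hden z hz
    have hgz := hmaps z hz
    have hgd : HasDerivAt g (1 / (c * z + d) ^ 2) z := monodromy_gderiv had hdz
    have hwz : HasDerivAt w (deriv w (g z)) (g z) :=
      ((hw1 _ hgz).differentiableAt (hU.mem_nhds hgz)).hasDerivAt
    have h2 : HasDerivAt (fun z => w (g z)) (deriv w (g z) * (1 / (c * z + d) ^ 2)) z :=
      hwz.comp z hgd
    have h1 : HasDerivAt (fun z => c * z + d) c z := by
      simpa using ((hasDerivAt_id z).const_mul c).add_const d
    have := h1.mul h2
    have heq : c * w (g z) + (c * z + d) * (deriv w (g z) * (1 / (c * z + d) ^ 2)) =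
        c * w (g z) + deriv w (g z) / (c * z + d) := by field_simp
    rwa [heq] at this
  -- derivative of phi-w
  have hphi : ∀ z ∈ U, HasDerivAt (fun z => c * w (g z) + deriv w (g z) / (c * z + d))
      (deriv (deriv w) (g z) / (c * z + d) ^ 3) z := by
    intro z hz
    have hdz := hden z hz
    have hgz := hmaps z hz
    have hgd : HasDerivAt g (1 / (c * z + d) ^ 2) z := monodromy_gderiv had hdz
    have hwz : HasDerivAt w (deriv w (g z)) (g z) :=
      ((hw1 _ hgz).differentiableAt (hU.mem_nhds hgz)).hasDerivAt
    have hwz2 : HasDerivAt (deriv w) (deriv (deriv w) (g z)) (g z) :=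
      ((hw2 _ hgz).differentiableAt (hU.mem_nhds hgz)).hasDerivAt
    have h2 : HasDerivAt (fun z => w (g z)) (deriv w (g z) * (1 / (c * z + d) ^ 2)) z :=
      hwz.comp z hgd
    have h3 : HasDerivAt (fun z => deriv w (g z))
        (deriv (deriv w) (g z) * (1 / (c * z + d) ^ 2)) z := hwz2.comp z hgd
    have h1 : HasDerivAt (fun z => c * z + d) c z := by
      simpa using ((hasDerivAt_id z).const_mul c).add_const d
    have h4 := h3.div h1 hdz
    have := (h2.const_mul c).add h4
    have heq : c * (deriv w (g z) * (1 / (c * z + d) ^ 2)) +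
        (deriv (deriv w) (g z) * (1 / (c * z + d) ^ 2) * (c * z + d) - deriv w (g z) * c) /
          (c * z + d) ^ 2 = deriv (deriv w) (g z) / (c * z + d) ^ 3 := by
      field_simp
      ring
    rwa [heq] at this
  -- the T transformation, explicit
  have hTc : ∀ z ∈ U, T (g z) = T z * (c * z + d) ^ 4 := by
    intro z hz
    have hdz := hden z hz
    have h := hTtr z hz
    rw [(monodromy_gderiv had hdz).deriv] at h
    have hX : (1 / (c * z + d) ^ 2) ^ 2 * (c * z + d) ^ 4 = 1 := by field_simp
    have h' : T ((a * z + b) / (c * z + d)) * (1 / (c * z + d) ^ 2) ^ 2 * (c * z + d) ^ 4 =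
        T z * (c * z + d) ^ 4 := by rw [h]
    rw [mul_assoc, hX, mul_one] at h'
    exact h'
  -- second derivative facts
  have hDu : ∀ z ∈ U, HasDerivAt u (deriv u z) z :=
    fun z hz => ((hu1 z hz).differentiableAt (hU.mem_nhds hz)).hasDerivAt
  have hDu2 : ∀ z ∈ U, HasDerivAt (deriv u) (deriv (deriv u) z) z :=
    fun z hz => ((hu2 z hz).differentiableAt (hU.mem_nhds hz)).hasDerivAt
  have hDv : ∀ z ∈ U, HasDerivAt v (deriv v z) z :=
    fun z hz => ((hv1 z hz).differentiableAt (hU.mem_nhds hz)).hasDerivAt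
  have hDv2 : ∀ z ∈ U, HasDerivAt (deriv v) (deriv (deriv v) z) z :=
    fun z hz => ((hv2 z hz).differentiableAt (hU.mem_nhds hz)).hasDerivAt
  -- A has derivative zero
  set A : ℂ → ℂ := fun z => ((c * z + d) * w (g z)) * deriv v z -
      (c * w (g z) + deriv w (g z) / (c * z + d)) * v z with hA
  set B : ℂ → ℂ := fun z => u z * (c * w (g z) + deriv w (g z) / (c * z + d)) -
      deriv u z * ((c * z + d) * w (g z)) with hB
  have hA0 : ∀ z ∈ U, HasDerivAt A 0 z := by
    intro z hz
    have hdz := hden z hz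
    have hgz := hmaps z hz
    have h := ((htil z hz).mul (hDv2 z hz)).sub ((hphi z hz).mul (hDv z hz))
    have hv2e : deriv (deriv v) z = -(1 / 2) * T z * v z := by linear_combination hv z hz
    have hw2e : deriv (deriv w) (g z) = -(1 / 2) * (T z * (c * z + d) ^ 4) * w (g z) := by
      have := hw (g z) hgz
      rw [hTc z hz] at this
      linear_combination this
    have heq : (c * w (g z) + deriv w (g z) / (c * z + d)) * deriv v z +
        (c * z + d) * w (g z) * deriv (deriv v) z -
        (deriv (deriv w) (g z) / (c * z + d) ^ 3 * v z +
          (c * w (g z) + deriv w (g z) / (c * z + d)) * deriv v z) = 0 := by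
      rw [hv2e, hw2e]; field_simp; ring
    rwa [heq] at h
  have hB0 : ∀ z ∈ U, HasDerivAt B 0 z := by
    intro z hz
    have hdz := hden z hz
    have hgz := hmaps z hz
    have h := ((hDu z hz).mul (hphi z hz)).sub ((hDu2 z hz).mul (htil z hz))
    have hu2e : deriv (deriv u) z = -(1 / 2) * T z * u z := by linear_combination hu z hz
    have hw2e : deriv (deriv w) (g z) = -(1 / 2) * (T z * (c * z + d) ^ 4) * w (g z) := by
      have := hw (g z) hgz
      rw [hTc z hz] at this
      linear_combination this
    have heq : deriv u z * (c * w (g z) + deriv w (g z) / (c * z + d)) +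
        u z * (deriv (deriv w) (g z) / (c * z + d) ^ 3) -
        (deriv (deriv u) z * ((c * z + d) * w (g z)) +
          deriv u z * (c * w (g z) + deriv w (g z) / (c * z + d))) = 0 := by
      rw [hu2e, hw2e]; field_simp; ring
    rwa [heq] at h
  have hAc := monodromy_const_aux hU hUc hA0 hz₀
  have hBc := monodromy_const_aux hU hUc hB0 hz₀
  intro z hz
  have e1 : A z = A z₀ := hAc z hz
  have e2 : B z = B z₀ := hBc z hz
  have hWz := hW z hz
  have key : ((c * z + d) * w (g z)) * W = A z * u z + B z * v z := by
    simp only [hA, hB]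
    linear_combination (-((c * z + d) * w (g z))) * hWz
  rw [e1, e2] at key
  simp only [hA, hB] at key
  rw [div_mul_eq_mul_div, div_mul_eq_mul_div, ← add_div, eq_div_iff hWne]
  linear_combination key


/-- Existence of the monodromy matrix: if `u, v` are linearly independent solutions of
the Fuchs equation `w'' + (1/2)·T·w = 0` on a connected `γ`-invariant open domain, with
`T` transforming as a quadratic differential under the unit-determinant Möbius map
`γ(z) = (az+b)/(cz+d)`, then there is a constant matrix `χ ∈ SL(2,ℂ)` with
`(cz+d)·(u(γz), v(γz))ᵀ = χ·(u(z), v(z))ᵀ`. -/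
theorem monodromy_exists
    (U : Set ℂ) (hU : IsOpen U) (hUc : IsPreconnected U) (hne : U.Nonempty)
    (a b c d : ℂ) (had : a * d - b * c = 1)
    (T u v : ℂ → ℂ) (W : ℂ) (hWne : W ≠ 0)
    (hT : DifferentiableOn ℂ T U)
    (hmaps : ∀ z ∈ U, (a * z + b) / (c * z + d) ∈ U)
    (hden : ∀ z ∈ U, c * z + d ≠ 0)
    (hu1 : DifferentiableOn ℂ u U) (hu2 : DifferentiableOn ℂ (deriv u) U)
    (hv1 : DifferentiableOn ℂ v U) (hv2 : DifferentiableOn ℂ (deriv v) U)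
    (hu : ∀ z ∈ U, deriv (deriv u) z + (1 / 2) * T z * u z = 0)
    (hv : ∀ z ∈ U, deriv (deriv v) z + (1 / 2) * T z * v z = 0)
    (hW : ∀ z ∈ U, u z * deriv v z - deriv u z * v z = W)
    (hTtr : ∀ z ∈ U,
      T ((a * z + b) / (c * z + d)) *
        (deriv (fun w => (a * w + b) / (c * w + d)) z) ^ 2 = T z) :
    ∃ χ : Matrix (Fin 2) (Fin 2) ℂ, χ.det = 1 ∧ ∀ z ∈ U,
      (c * z + d) * u ((a * z + b) / (c * z + d)) = χ 0 0 * u z + χ 0 1 * v z ∧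
      (c * z + d) * v ((a * z + b) / (c * z + d)) = χ 1 0 * u z + χ 1 1 * v z := by
  obtain ⟨z₀, hz₀⟩ := hne
  have Hu := monodromy_row U hU hUc a b c d had T u v u W hWne hmaps hden
    hu1 hu2 hv1 hv2 hu1 hu2 hu hv hu hW hTtr z₀ hz₀
  have Hv := monodromy_row U hU hUc a b c d had T u v v W hWne hmaps hden
    hu1 hu2 hv1 hv2 hv1 hv2 hu hv hv hW hTtr z₀ hz₀
  set p : ℂ := (c * z₀ + d) * u ((a * z₀ + b) / (c * z₀ + d)) with hp
  set q : ℂ := c * u ((a * z₀ + b) / (c * z₀ + d)) +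
      deriv u ((a * z₀ + b) / (c * z₀ + d)) / (c * z₀ + d) with hq
  set r : ℂ := (c * z₀ + d) * v ((a * z₀ + b) / (c * z₀ + d)) with hr
  set s : ℂ := c * v ((a * z₀ + b) / (c * z₀ + d)) +
      deriv v ((a * z₀ + b) / (c * z₀ + d)) / (c * z₀ + d) with hs
  have h1 := hW z₀ hz₀
  have h2 := hW ((a * z₀ + b) / (c * z₀ + d)) (hmaps z₀ hz₀)
  have hd0 := hden z₀ hz₀
  have hps : p * s - q * r = W := by
    rw [hp, hq, hr, hs]
    have hk : (c * z₀ + d) * (1 / (c * z₀ + d)) = 1 := by field_simp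
    linear_combination h2 + (u ((a * z₀ + b) / (c * z₀ + d)) * deriv v ((a * z₀ + b) / (c * z₀ + d)) -
      deriv u ((a * z₀ + b) / (c * z₀ + d)) * v ((a * z₀ + b) / (c * z₀ + d))) * hk
  refine ⟨!![(p * deriv v z₀ - q * v z₀) / W, (u z₀ * q - deriv u z₀ * p) / W;
      (r * deriv v z₀ - s * v z₀) / W, (u z₀ * s - deriv u z₀ * r) / W], ?_, ?_⟩
  · rw [Matrix.det_fin_two_of]
    field_simp
    linear_combination (u z₀ * deriv v z₀ - deriv u z₀ * v z₀) * hps + W * h1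
  · intro z hz
    constructor
    · simpa using Hu z hz
    · simpa using Hv z hz
end

section
/- If m(z) = [[u, u'],[v, v']] where u,v satisfy the Fuchs equation with transformation-invariant T, and η_γ is the factor of automorphy, then m(γ(z))·η_γ(z) = χ·m(z) where χ is the (constant) monodromy matrix of (u,v) for γ. -/
/-- If `m(z) = [[u, u'],[v, v']]` where `u, v` solve the Fuchs equation with a
transformation-invariant `T`, `η_γ(z) = [[cz+d, c],[0,(cz+d)⁻¹]]` is the factor of
automorphy for `γ(z) = (az+b)/(cz+d)`, `ad-bc = 1`, and `χ` is the constant monodromy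
matrix with `(cz+d)·(u(γz), v(γz))ᵀ = χ·(u(z), v(z))ᵀ`, then
`m(γ(z))·η_γ(z) = χ·m(z)`. -/
theorem m_transforms_with_monodromy
    (U : Set ℂ) (hU : IsOpen U) (a b c d : ℂ) (had : a * d - b * c = 1)
    (T u v : ℂ → ℂ) (χ : Matrix (Fin 2) (Fin 2) ℂ)
    (hmaps : ∀ z ∈ U, (a * z + b) / (c * z + d) ∈ U)
    (hden : ∀ z ∈ U, c * z + d ≠ 0)
    (hu1 : DifferentiableOn ℂ u U) (hv1 : DifferentiableOn ℂ v U)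
    (hu : ∀ z ∈ U, deriv (deriv u) z + (1 / 2) * T z * u z = 0)
    (hv : ∀ z ∈ U, deriv (deriv v) z + (1 / 2) * T z * v z = 0)
    (hW : ∀ z ∈ U, u z * deriv v z - deriv u z * v z = 1)
    (hTtr : ∀ z ∈ U,
      T ((a * z + b) / (c * z + d)) *
        (deriv (fun w => (a * w + b) / (c * w + d)) z) ^ 2 = T z)
    (hχ : ∀ z ∈ U,
      (c * z + d) * u ((a * z + b) / (c * z + d)) = χ 0 0 * u z + χ 0 1 * v z ∧
      (c * z + d) * v ((a * z + b) / (c * z + d)) = χ 1 0 * u z + χ 1 1 * v z) :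
    ∀ z ∈ U,
      (!![u ((a * z + b) / (c * z + d)), deriv u ((a * z + b) / (c * z + d));
          v ((a * z + b) / (c * z + d)), deriv v ((a * z + b) / (c * z + d))] :
        Matrix (Fin 2) (Fin 2) ℂ) *
        !![c * z + d, c; 0, (c * z + d)⁻¹] =
      χ * !![u z, deriv u z; v z, deriv v z] := by
  intro z hz
  set γ : ℂ → ℂ := fun t => (a * t + b) / (c * t + d) with hγ
  have hdz : c * z + d ≠ 0 := hden z hz
  have hwU : γ z ∈ U := hmaps z hz
  -- derivative of γ at z
  have hnum : HasDerivAt (fun t => a * t + b) a z := by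
    simpa using ((hasDerivAt_id z).const_mul a).add_const b
  have hden' : HasDerivAt (fun t => c * t + d) c z := by
    simpa using ((hasDerivAt_id z).const_mul c).add_const d
  have hγ' : HasDerivAt γ (((c * z + d) ^ 2)⁻¹) z := by
    have h0 := hnum.div hden' hdz
    have hnum1 : a * (c * z + d) - (a * z + b) * c = 1 := by linear_combination had
    rw [hnum1, one_div] at h0
    exact h0
  -- a general fact: for f differentiable near, derivative of (c t + d) * f (γ t)
  have key : ∀ f : ℂ → ℂ, DifferentiableOn ℂ f U →
      HasDerivAt (fun t => (c * t + d) * f (γ t))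
        (c * f (γ z) + (c * z + d) * (deriv f (γ z) * ((c * z + d) ^ 2)⁻¹)) z := by
    intro f hf
    have hfw : DifferentiableAt ℂ f (γ z) :=
      (hf.differentiableAt (hU.mem_nhds hwU))
    have h1 : HasDerivAt (fun t => f (γ t)) (deriv f (γ z) * ((c * z + d) ^ 2)⁻¹) z :=
      (hfw.hasDerivAt).comp z hγ'
    exact hden'.mul h1
  have hduz : DifferentiableAt ℂ u z := hu1.differentiableAt (hU.mem_nhds hz)
  have hdvz : DifferentiableAt ℂ v z := hv1.differentiableAt (hU.mem_nhds hz)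
  -- differentiate the monodromy relations
  have main : ∀ (f : ℂ → ℂ) (p q : ℂ), DifferentiableOn ℂ f U →
      (∀ t ∈ U, (c * t + d) * f (γ t) = p * u t + q * v t) →
      c * f (γ z) + (c * z + d) * (deriv f (γ z) * ((c * z + d) ^ 2)⁻¹)
        = p * deriv u z + q * deriv v z := by
    intro f p q hf hrel
    have HL := key f hf
    have HR : HasDerivAt (fun t => p * u t + q * v t)
        (p * deriv u z + q * deriv v z) z :=
      ((hduz.hasDerivAt.const_mul p).add (hdvz.hasDerivAt.const_mul q))
    have heq : (fun t => (c * t + d) * f (γ t)) =ᶠ[nhds z] fun t => p * u t + q * v t := by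
      filter_upwards [hU.mem_nhds hz] with t ht using hrel t ht
    have HL' : HasDerivAt (fun t => p * u t + q * v t)
        (c * f (γ z) + (c * z + d) * (deriv f (γ z) * ((c * z + d) ^ 2)⁻¹)) z :=
      HL.congr_of_eventuallyEq heq.symm
    exact HL'.unique HR
  have Du := main u (χ 0 0) (χ 0 1) hu1 (fun t ht => (hχ t ht).1)
  have Dv := main v (χ 1 0) (χ 1 1) hv1 (fun t ht => (hχ t ht).2)
  have E1 := (hχ z hz).1
  have E2 := (hχ z hz).2
  have hsq : ∀ X : ℂ, (c * z + d) * (X * ((c * z + d) ^ 2)⁻¹) = X * (c * z + d)⁻¹ := by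
    intro X
    field_simp
  rw [hsq] at Du Dv
  ext i j
  fin_cases i <;> fin_cases j <;>
    simp [Matrix.mul_apply, Fin.sum_univ_succ]
  · linear_combination E1
  · linear_combination Du
  · linear_combination E2
  · linear_combination Dv
end
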